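/- Let D and L be independent integrable nonnegative random variables with right-unbounded support (P[D>x]>0 and P[L>x]>0 for all x≥0), and let {L_n} be i.i.d. copies of L independent of D. Define τ = inf{k≥0 : L_k > D} and the restart time T^R = Σ_{i=0}^{τ-1} L_i + D. Then E[T^R] = E[D] + ∫_0^∞ (E[L·1{L≤z}] / P[L>z]) f_D(dz), where f_D is the distribution of D. -/

import Mathlib

open MeasureTheory ProbabilityTheory Filter Set
open scoped ENNReal NNReal Topology

/-- Expected restart time formula:
`E[T^R] = E[D] + ∫₀^∞ E[L·1{L≤z}] / P[L>z] f_D(dz)`. -/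
theorem restart_expected_time
    {Ω : Type*} [MeasurableSpace Ω] (P : Measure Ω) [IsProbabilityMeasure P]
    (D L0 : Ω → ℝ) (L : ℕ → Ω → ℝ)
    (hDmeas : Measurable D) (hL0meas : Measurable L0) (hLmeas : ∀ n, Measurable (L n))
    (hDnn : ∀ ω, 0 ≤ D ω) (hL0nn : ∀ ω, 0 ≤ L0 ω) (hLnn : ∀ n ω, 0 ≤ L n ω)
    (hDint : Integrable D P) (hL0int : Integrable L0 P)
    (hDsupp : ∀ x : ℝ, 0 ≤ x → 0 < P {ω | x < D ω})
    (hLsupp : ∀ x : ℝ, 0 ≤ x → 0 < P {ω | x < L0 ω})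
    -- {L n} are identically distributed copies of L0 ...
    (hid : ∀ n, IdentDistrib (L n) L0 P P)
    -- ... and the family (D, L 0, L 1, ...) is independent
    (hindep : iIndepFun (β := fun _ : Option ℕ => ℝ)
        (fun i => Option.elim i D L) P)
    (τ : Ω → ℕ) (hτ : ∀ ω, τ ω = sInf {k : ℕ | D ω < L k ω})
    (T : Ω → ℝ) (hT : ∀ ω, T ω = (∑ i ∈ Finset.range (τ ω), L i ω) + D ω) :
    ∫⁻ ω, ENNReal.ofReal (T ω) ∂P
      = (∫⁻ ω, ENNReal.ofReal (D ω) ∂P)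
        + ∫⁻ z, (∫⁻ ω in {ω' | L0 ω' ≤ z}, ENNReal.ofReal (L0 ω) ∂P)
            / P {ω | z < L0 ω} ∂(P.map D) := by
  classical
  set X : Option ℕ → Ω → ℝ := fun i => Option.elim i D L with hX
  have hXmeas : ∀ i, Measurable (X i) := by rintro (_ | i); exacts [hDmeas, hLmeas i]
  set F : ℝ → ℝ≥0∞ := fun z => P {ω | L0 ω ≤ z} with hF
  set G : ℝ → ℝ≥0∞ := fun z => P {ω | z < L0 ω} with hG
  set m : ℝ → ℝ≥0∞ := fun z => ∫⁻ ω in {ω' | L0 ω' ≤ z}, ENNReal.ofReal (L0 ω) ∂P with hm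
  set B : ℕ → Set Ω := fun n => {ω | ∀ k ≤ n, L k ω ≤ D ω} with hB
  have hBmeas : ∀ n, MeasurableSet (B n) := by
    intro n
    have : B n = ⋂ k, ⋂ (_ : k ≤ n), {ω | L k ω ≤ D ω} := by
      ext ω; simp [hB]
    rw [this]
    exact MeasurableSet.iInter fun k => MeasurableSet.iInter fun _ =>
      measurableSet_le (hLmeas k) hDmeas
  have hμprob : IsProbabilityMeasure (P.map D) := Measure.isProbabilityMeasure_map hDmeas.aemeasurable
  -- F is monotone hence measurable; same for m
  have hFmono : Monotone F := fun a b hab => measure_mono fun ω hω => le_trans hω hab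
  have hFmeas : Measurable F := hFmono.measurable
  have hmmono : Monotone m := fun a b hab =>
    lintegral_mono_set fun ω hω => le_trans hω hab
  have hmmeas : Measurable m := hmmono.measurable
  -- G z = 1 - F z  and F z < 1
  have hGF : ∀ z, G z = 1 - F z := by
    intro z
    have hs : {ω | z < L0 ω} = {ω | L0 ω ≤ z}ᶜ := by ext ω; simp [not_le]
    show P {ω | z < L0 ω} = 1 - P {ω | L0 ω ≤ z}
    rw [hs, prob_compl_eq_one_sub (measurableSet_le hL0meas measurable_const)]
  have hGpos : ∀ z, 0 < G z := by
    intro z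
    rcases le_or_gt 0 z with h | h
    · exact hLsupp z h
    · have : {ω | z < L0 ω} = univ := eq_univ_of_forall fun ω => lt_of_lt_of_le h (hL0nn ω)
      rw [hG]; simp only [this, measure_univ]; exact zero_lt_one
  have hFlt : ∀ z, F z < 1 := by
    intro z
    refine lt_of_le_of_ne prob_le_one fun h => ?_
    have := hGF z
    rw [h, tsub_self] at this
    exact absurd (this ▸ hGpos z) (lt_irrefl 0)
  -- Key computation
  have key : ∀ (n : ℕ) (h : ℝ → ℝ≥0∞), Measurable h →
      ∫⁻ ω in B n, h (L n ω) ∂P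
        = ∫⁻ z, F z ^ n * ∫⁻ ω in {ω' | L0 ω' ≤ z}, h (L0 ω) ∂P ∂(P.map D) := by
    intro n h hh
    set V : Ω → (Fin (n+1) → ℝ) := fun ω k => L k ω with hVdef
    have hV : Measurable V := measurable_pi_lambda _ fun k => hLmeas k
    set C : Set (ℝ × (Fin (n+1) → ℝ)) := {p | ∀ k, p.2 k ≤ p.1} with hCdef
    have hC : MeasurableSet C := by
      have : C = ⋂ k, {p : ℝ × (Fin (n+1) → ℝ) | p.2 k ≤ p.1} := by ext p; simp [hCdef]
      rw [this]
      have hk : ∀ k : Fin (n+1), Measurable fun p : ℝ × (Fin (n + 1) → ℝ) => p.2 k := by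
        intro k
        exact (measurable_pi_apply k).comp measurable_snd
      exact MeasurableSet.iInter fun k => measurableSet_le (hk k) measurable_fst
    set g : ℝ × (Fin (n+1) → ℝ) → ℝ≥0∞ := C.indicator (fun p => h (p.2 (Fin.last n))) with hgdef
    have hg : Measurable g :=
      (hh.comp ((measurable_pi_apply _).comp measurable_snd)).indicator hC
    have hpre : (fun ω => (D ω, V ω)) ⁻¹' C = B n := by
      ext ω
      constructor
      · intro hω k hk
        exact hω ⟨k, Nat.lt_succ_of_le hk⟩
      · intro hω k
        exact hω k (Nat.lt_succ_iff.mp k.isLt)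
    -- independence of D and the vector V
    have hDV : IndepFun D V P := by
      set S : Finset (Option ℕ) := {none} with hS
      set Tn : Finset (Option ℕ) := (Finset.range (n+1)).image some with hTn
      have hST : Disjoint S Tn := by
        rw [Finset.disjoint_left]
        intro a ha hb
        rw [hS, Finset.mem_singleton] at ha
        rw [hTn, Finset.mem_image] at hb
        obtain ⟨k, _, hk⟩ := hb
        rw [ha] at hk; exact Option.some_ne_none k hk
      have h1 := hindep.indepFun_finset S Tn hST hXmeas
      have hψ1 : Measurable (fun v : (∀ _i : S, ℝ) => v ⟨none, by simp [hS]⟩) :=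
        measurable_pi_apply _
      have hψ2 : Measurable (fun (v : ∀ _i : Tn, ℝ) (k : Fin (n+1)) =>
          v ⟨some k, by rw [hTn]; exact Finset.mem_image.mpr ⟨(k : ℕ), Finset.mem_range.mpr k.isLt, rfl⟩⟩) :=
        measurable_pi_lambda _ fun k => measurable_pi_apply _
      exact h1.comp hψ1 hψ2
    have hmapeq : P.map (fun ω => (D ω, V ω)) = (P.map D).prod (P.map V) :=
      (indepFun_iff_map_prod_eq_prod_map_map hDmeas.aemeasurable hV.aemeasurable).mp hDV
    have hVprob : IsProbabilityMeasure (P.map V) := Measure.isProbabilityMeasure_map hV.aemeasurable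
    -- inner integral computation for each z
    have inner : ∀ z : ℝ, ∫⁻ v, g (z, v) ∂(P.map V)
        = F z ^ n * ∫⁻ ω in {ω' | L0 ω' ≤ z}, h (L0 ω) ∂P := by
      intro z
      have hgz : Measurable fun v => g (z, v) := hg.comp measurable_prodMk_left
      rw [lintegral_map hgz hV]
      set A1 : Set Ω := ⋂ k ∈ Finset.range n, {ω | L k ω ≤ z} with hA1
      have hA1meas : MeasurableSet A1 :=
        Finset.measurableSet_biInter _ fun k _ => measurableSet_le (hLmeas k) measurable_const
      set φ2 : ℝ → ℝ≥0∞ := (Set.Iic z).indicator h with hφ2def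
      have hφ2 : Measurable φ2 := hh.indicator measurableSet_Iic
      have hA1mem : ∀ ω, ω ∈ A1 ↔ ∀ k < n, L k ω ≤ z := by
        intro ω; simp [hA1]
      have hps : ∀ ω, g (z, V ω) = A1.indicator 1 ω * φ2 (L n ω) := by
        intro ω
        by_cases h1 : ω ∈ A1
        · by_cases h2 : L n ω ≤ z
          · have hmem : (z, V ω) ∈ C := by
              intro k
              rcases Nat.lt_succ_iff_lt_or_eq.mp k.isLt with hk | hk
              · exact (hA1mem ω).mp h1 k hk
              · show L (k : ℕ) ω ≤ z
                rw [hk]; exact h2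
            rw [hgdef]
            rw [Set.indicator_of_mem hmem, Set.indicator_of_mem h1,
              hφ2def, Set.indicator_of_mem (show L n ω ∈ Set.Iic z from h2)]
            simp [hVdef]
          · have hmem : (z, V ω) ∉ C := by
              intro hc
              exact h2 (by simpa [hVdef] using hc (Fin.last n))
            rw [hgdef, Set.indicator_of_notMem hmem, hφ2def,
              Set.indicator_of_notMem (show L n ω ∉ Set.Iic z from h2), mul_zero]
        · have hmem : (z, V ω) ∉ C := by
            intro hc
            refine h1 ((hA1mem ω).mpr fun k hk => ?_)
            simpa using hc ⟨k, Nat.lt_succ_of_lt hk⟩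
          rw [hgdef, Set.indicator_of_notMem hmem, Set.indicator_of_notMem h1,
            zero_mul]
      calc ∫⁻ ω, g (z, V ω) ∂P = ∫⁻ ω, A1.indicator 1 ω * φ2 (L n ω) ∂P :=
            lintegral_congr hps
        _ = (∫⁻ ω, A1.indicator 1 ω ∂P) * ∫⁻ ω, φ2 (L n ω) ∂P := by
            -- independence of the indicator and φ2 (L n)
            have hSd : Disjoint ((Finset.range n).image some) ({some n} : Finset (Option ℕ)) := by
              rw [Finset.disjoint_left]
              intro a ha hb
              rw [Finset.mem_image] at ha
              rw [Finset.mem_singleton] at hb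
              obtain ⟨k, hk, rfl⟩ := ha
              rw [Option.some.injEq] at hb
              rw [hb] at hk
              exact absurd (Finset.mem_range.mp hk) (lt_irrefl n)
            have h2 := hindep.indepFun_finset _ _ hSd hXmeas
            set ψ1 : (∀ _i : ((Finset.range n).image some : Finset (Option ℕ)), ℝ) → ℝ≥0∞ :=
              fun v => {v' : ∀ _i : ((Finset.range n).image some : Finset (Option ℕ)), ℝ |
                ∀ i, v' i ≤ z}.indicator 1 v with hψ1def
            have hψ1 : Measurable ψ1 := by
              refine Measurable.indicator measurable_const ?_
              have : {v' : ∀ _i : ((Finset.range n).image some : Finset (Option ℕ)), ℝ |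
                  ∀ i, v' i ≤ z} = ⋂ i, {v' | v' i ≤ z} := by ext v'; simp
              rw [this]
              exact MeasurableSet.iInter fun i =>
                measurableSet_le (measurable_pi_apply i) measurable_const
            set ψ2 : (∀ _i : ({some n} : Finset (Option ℕ)), ℝ) → ℝ≥0∞ :=
              fun v => φ2 (v ⟨some n, Finset.mem_singleton_self _⟩) with hψ2def
            have hψ2 : Measurable ψ2 := hφ2.comp (measurable_pi_apply _)
            have hind := h2.comp hψ1 hψ2
            have heqf : (ψ1 ∘ fun a (i : ((Finset.range n).image some : Finset (Option ℕ))) =>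
                X i a) = fun ω => A1.indicator 1 ω := by
              funext ω
              by_cases h1 : ω ∈ A1
              · have : ∀ i : ((Finset.range n).image some : Finset (Option ℕ)),
                    X i ω ≤ z := by
                  rintro ⟨i, hi⟩
                  rw [Finset.mem_image] at hi
                  obtain ⟨k, hk, rfl⟩ := hi
                  exact (hA1mem ω).mp h1 k (Finset.mem_range.mp hk)
                simp only [Function.comp_apply, hψ1def]
                rw [Set.indicator_of_mem (show _ ∈ {v' : ∀ _i : ((Finset.range n).image some : Finset (Option ℕ)), ℝ | ∀ i, v' i ≤ z} from this),
                  Set.indicator_of_mem h1]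
                rfl
              · have : ¬ ∀ i : ((Finset.range n).image some : Finset (Option ℕ)),
                    X i ω ≤ z := by
                  intro hall
                  refine h1 ((hA1mem ω).mpr fun k hk => ?_)
                  exact hall ⟨some k, Finset.mem_image.mpr ⟨k, Finset.mem_range.mpr hk, rfl⟩⟩
                simp only [Function.comp_apply, hψ1def]
                rw [Set.indicator_of_notMem (show _ ∉ {v' : ∀ _i : ((Finset.range n).image some : Finset (Option ℕ)), ℝ | ∀ i, v' i ≤ z} from this),
                  Set.indicator_of_notMem h1]
            have heqg : (ψ2 ∘ fun a (i : ({some n} : Finset (Option ℕ))) => X i a)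
                = fun ω => φ2 (L n ω) := by
              funext ω; rfl
            rw [heqf, heqg] at hind
            exact lintegral_mul_eq_lintegral_mul_lintegral_of_indepFun
              (measurable_one.indicator hA1meas) (hφ2.comp (hLmeas n)) hind
        _ = F z ^ n * ∫⁻ ω in {ω' | L0 ω' ≤ z}, h (L0 ω) ∂P := by
            congr 1
            · -- P A1 = F z ^ n
              rw [lintegral_indicator_one hA1meas]
              have hA1' : A1 = ⋂ i ∈ (Finset.range n).image some, (X i ⁻¹' Iic z) := by
                ext ω
                simp only [hA1, Finset.mem_image, Set.mem_iInter, Set.mem_preimage,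
                  Set.mem_setOf_eq, Finset.mem_range, mem_Iic]
                constructor
                · rintro hω i ⟨k, hk, rfl⟩; exact hω k hk
                · intro hω k hk; exact hω (some k) ⟨k, hk, rfl⟩
              rw [hA1', hindep.meas_biInter fun i _ => ⟨Iic z, measurableSet_Iic, rfl⟩,
                Finset.prod_image (fun a _ b _ hab => Option.some.inj hab)]
              have : ∀ k ∈ Finset.range n, P (X (some k) ⁻¹' Iic z) = F z := by
                intro k _
                have := (hid k).measure_mem_eq (measurableSet_Iic (a := z))
                simpa [hF, hX, Set.preimage, Set.mem_Iic] using this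
              rw [Finset.prod_congr rfl this, Finset.prod_const, Finset.card_range]
            · -- ∫⁻ φ2 (L n ω) = set integral for L0
              have h1 : ∫⁻ ω, φ2 (L n ω) ∂P = ∫⁻ x, φ2 x ∂(P.map (L n)) :=
                (lintegral_map hφ2 (hLmeas n)).symm
              rw [h1, (hid n).map_eq, lintegral_map hφ2 hL0meas]
              rw [← lintegral_indicator (measurableSet_le hL0meas measurable_const)]
              refine lintegral_congr fun ω => ?_
              by_cases hω : L0 ω ≤ z
              · rw [hφ2def, Set.indicator_of_mem (Set.mem_Iic.mpr hω),
                  Set.indicator_of_mem (show ω ∈ {ω' | L0 ω' ≤ z} from hω)]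
              · rw [hφ2def, Set.indicator_of_notMem (fun hc => hω (Set.mem_Iic.mp hc)),
                  Set.indicator_of_notMem (show ω ∉ {ω' | L0 ω' ≤ z} from hω)]
    -- assemble
    calc ∫⁻ ω in B n, h (L n ω) ∂P
        = ∫⁻ ω, g (D ω, V ω) ∂P := by
          rw [← lintegral_indicator (hBmeas n)]
          refine lintegral_congr fun ω => ?_
          have h1 := Set.indicator_comp_right (s := C)
            (g := fun p : ℝ × (Fin (n+1) → ℝ) => h (p.2 (Fin.last n)))
            (fun ω : Ω => (D ω, V ω)) (x := ω)
          rw [hpre] at h1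
          exact h1
      _ = ∫⁻ p, g p ∂(P.map (fun ω => (D ω, V ω))) :=
          (lintegral_map hg (hDmeas.prodMk hV)).symm
      _ = ∫⁻ p, g p ∂((P.map D).prod (P.map V)) := by rw [hmapeq]
      _ = ∫⁻ z, ∫⁻ v, g (z, v) ∂(P.map V) ∂(P.map D) := lintegral_prod _ hg.aemeasurable
      _ = ∫⁻ z, F z ^ n * ∫⁻ ω in {ω' | L0 ω' ≤ z}, h (L0 ω) ∂P ∂(P.map D) :=
          lintegral_congr inner
  -- the event that all attempts fail is null
  have hN0 : P {ω | ∀ k, L k ω ≤ D ω} = 0 := by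
    set N : Set Ω := {ω | ∀ k, L k ω ≤ D ω} with hNdef
    have hle : ∀ n : ℕ, P N ≤ ∫⁻ z, F z ^ (n + 1) ∂(P.map D) := by
      intro n
      have hkey := key n (fun _ => 1) measurable_const
      simp only [setLIntegral_one] at hkey
      have : ∀ z : ℝ, F z ^ n * P {ω' | L0 ω' ≤ z} = F z ^ (n + 1) := by
        intro z
        show F z ^ n * F z = F z ^ (n + 1)
        rw [pow_succ]
      rw [lintegral_congr this] at hkey
      rw [← hkey]
      exact measure_mono fun ω hω k _ => hω k
    have htend : Tendsto (fun n : ℕ => ∫⁻ z, F z ^ (n + 1) ∂(P.map D)) atTop (𝓝 0) := by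
      have h0 : (0 : ℝ≥0∞) = ∫⁻ _, 0 ∂(P.map D) := by simp
      rw [h0]
      refine tendsto_lintegral_of_dominated_convergence (fun _ => 1)
        (fun n => (hFmeas.pow_const (n + 1))) (fun n => ae_of_all _ fun z => pow_le_one' prob_le_one _)
        (by simp) (ae_of_all _ fun z => ?_)
      have := ENNReal.tendsto_pow_atTop_nhds_zero_of_lt_one (hFlt z)
      exact this.comp (tendsto_add_atTop_nat 1)
    exact le_antisymm (ge_of_tendsto' htend hle) zero_le
  -- rewrite the integrand a.e.
  have hstep1 : (fun ω => ENNReal.ofReal (T ω)) =ᵐ[P]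
      fun ω => (∑' i, (B i).indicator (fun ω' => ENNReal.ofReal (L i ω')) ω)
        + ENNReal.ofReal (D ω) := by
    filter_upwards [(measure_eq_zero_iff_ae_notMem).mp hN0] with ω hω
    obtain ⟨k0, hk0⟩ : ∃ k, D ω < L k ω := by
      by_contra hc; push_neg at hc; exact hω fun k => hc k
    have hne : {k : ℕ | D ω < L k ω}.Nonempty := ⟨k0, hk0⟩
    have hiff : ∀ i, i < τ ω ↔ ω ∈ B i := by
      intro i
      rw [hτ]
      constructor
      · intro hi k hk
        by_contra hlt
        push_neg at hlt
        have := Nat.sInf_le (show k ∈ {k : ℕ | D ω < L k ω} from hlt)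
        omega
      · intro hBω
        by_contra hns
        push_neg at hns
        have hmem := Nat.sInf_mem hne
        exact absurd (hBω _ hns) (not_le.mpr hmem)
    have h1 : ENNReal.ofReal (T ω)
        = (∑ i ∈ Finset.range (τ ω), ENNReal.ofReal (L i ω)) + ENNReal.ofReal (D ω) := by
      rw [hT ω, ENNReal.ofReal_add (Finset.sum_nonneg fun i _ => hLnn i ω) (hDnn ω),
        ENNReal.ofReal_sum_of_nonneg fun i _ => hLnn i ω]
    have h2 : (∑' i, (B i).indicator (fun ω' => ENNReal.ofReal (L i ω')) ω)
        = ∑ i ∈ Finset.range (τ ω), ENNReal.ofReal (L i ω) := by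
      rw [tsum_eq_sum (s := Finset.range (τ ω)) (fun i hi =>
        Set.indicator_of_notMem (fun hc => hi (Finset.mem_range.mpr ((hiff i).mpr hc))) _)]
      exact Finset.sum_congr rfl fun i hi =>
        Set.indicator_of_mem ((hiff i).mp (Finset.mem_range.mp hi)) _
    rw [h1, h2]
  -- final assembly
  rw [lintegral_congr_ae hstep1,
    lintegral_add_right _ hDmeas.ennreal_ofReal,
    lintegral_tsum (fun i =>
      ((hLmeas i).ennreal_ofReal.indicator (hBmeas i)).aemeasurable)]
  have hterm : ∀ i : ℕ, ∫⁻ ω, (B i).indicator (fun ω' => ENNReal.ofReal (L i ω')) ω ∂P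
      = ∫⁻ z, F z ^ i * m z ∂(P.map D) := by
    intro i
    rw [lintegral_indicator (hBmeas i)]
    exact key i ENNReal.ofReal ENNReal.measurable_ofReal
  rw [tsum_congr hterm,
    ← lintegral_tsum (f := fun i z => F z ^ i * m z) (fun i => ((hFmeas.pow_const i).mul hmmeas).aemeasurable)]
  have hfinal : ∀ z : ℝ, (∑' i : ℕ, F z ^ i * m z) = m z / G z := by
    intro z
    rw [ENNReal.tsum_mul_right, ENNReal.tsum_geometric, ENNReal.div_eq_inv_mul, hGF z]
  rw [lintegral_congr hfinal, add_comm]
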